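/- For every integer n ≥ 2 and every integer k with 1 ≤ k ≤ n−1, we have n · sin(πk/n)/sin(π/n) ≥ k(n−k) + 1, with equality if and only if k = 1 or k = n−1. -/

import Mathlib

open Real

private lemma sin_cubic_lb {t : ℝ} (ht : 0 ≤ t) : t - t ^ 3 / 6 ≤ Real.sin t := by
  have hder : ∀ x : ℝ, HasDerivAt (fun t : ℝ => Real.sin t - (t - t ^ 3 / 6))
      (Real.cos x - (1 - x ^ 2 / 2)) x := by
    intro x
    have h1 := Real.hasDerivAt_sin x
    have h2 : HasDerivAt (fun t : ℝ => t - t ^ 3 / 6) (1 - x ^ 2 / 2) x := by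
      have h3 : HasDerivAt (fun t : ℝ => t ^ 3 / 6) (x ^ 2 / 2) x := by
        have := (hasDerivAt_pow 3 x).div_const 6
        exact this.congr_deriv (by norm_num; ring)
      have := (hasDerivAt_id x).sub h3
      exact this
    exact h1.sub h2
  have hmono : Monotone (fun t : ℝ => Real.sin t - (t - t ^ 3 / 6)) := by
    apply monotone_of_deriv_nonneg
    · intro x
      exact (hder x).differentiableAt
    · intro x
      rw [(hder x).deriv]
      have := Real.one_sub_sq_div_two_le_cos (x := x)
      linarith
  have := hmono ht
  simp only [Real.sin_zero] at this
  norm_num at this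
  linarith

private lemma key_strict (n m : ℤ) (hm : 2 ≤ m) (hmn : 2 * m ≤ n) :
    ((m : ℝ) * ((n : ℝ) - m) + 1) * Real.sin (π / n) < (n : ℝ) * Real.sin (π * m / n) := by
  have hM : (2 : ℝ) ≤ (m : ℝ) := by exact_mod_cast hm
  have hMN : 2 * (m : ℝ) ≤ (n : ℝ) := by exact_mod_cast hmn
  have hN : (4 : ℝ) ≤ (n : ℝ) := by linarith
  have hN0 : (0 : ℝ) < (n : ℝ) := by linarith
  have hpi : (0 : ℝ) < π := Real.pi_pos
  have hpos : (0 : ℝ) < (m : ℝ) * ((n : ℝ) - m) + 1 := by nlinarith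
  -- sin(π/n) ≤ π/n
  have hsle : Real.sin (π / n) ≤ π / n := (Real.sin_lt (by positivity)).le
  have step1 : ((m : ℝ) * ((n : ℝ) - m) + 1) * Real.sin (π / n)
      ≤ ((m : ℝ) * ((n : ℝ) - m) + 1) * (π / n) :=
    mul_le_mul_of_nonneg_left hsle hpos.le
  have hpi_lt : π < 3.15 := by linarith [Real.pi_lt_d2]
  rcases eq_or_lt_of_le hN with h4 | h5
  · -- n = 4, m = 2
    have hn4 : n = 4 := by exact_mod_cast h4.symm
    have hm2 : m = 2 := by omega
    subst hn4 hm2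
    have : Real.sin (π * (2 : ℤ) / (4 : ℤ)) = 1 := by
      norm_num
      rw [show π * 2 / 4 = π / 2 by ring]
      exact Real.sin_pi_div_two
    rw [this]
    push_cast
    calc ((2 : ℝ) * ((4 : ℝ) - 2) + 1) * Real.sin (π / 4)
        ≤ 5 * (π / 4) := by norm_num at step1 ⊢; linarith [step1]
      _ < 4 * 1 := by linarith
  · -- n ≥ 5
    have hN5 : (5 : ℝ) ≤ (n : ℝ) := by
      have : (4 : ℤ) < n := by exact_mod_cast h5
      have : (5 : ℤ) ≤ n := by omega
      exact_mod_cast this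
    set t : ℝ := π * m / n with ht
    have ht0 : 0 ≤ t := by positivity
    have hcb := sin_cubic_lb ht0
    have key : ((m : ℝ) * ((n : ℝ) - m) + 1) * (π / n) < (n : ℝ) * (t - t ^ 3 / 6) := by
      rw [ht]
      have hpisq : π ^ 2 < 9.9225 := by nlinarith
      have hred : π ^ 2 * (m : ℝ) ^ 3 < ((m : ℝ) ^ 2 - 1) * (6 * n) := by
        rcases eq_or_lt_of_le hM with hm2 | hm3
        · -- m = 2
          rw [← hm2]
          nlinarith [hN5]
        · have hm3' : (3 : ℝ) ≤ (m : ℝ) := by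
            have h1 : (2 : ℤ) < m := by exact_mod_cast hm3
            have h2 : (3 : ℤ) ≤ m := by omega
            exact_mod_cast h2
          have h1 : (m : ℝ) ^ 2 * (2 * (m : ℝ)) ≤ (m : ℝ) ^ 2 * (n : ℝ) :=
            mul_le_mul_of_nonneg_left hMN (sq_nonneg _)
          have h2 : 9 * (n : ℝ) ≤ (m : ℝ) ^ 2 * (n : ℝ) :=
            mul_le_mul_of_nonneg_right (by nlinarith : (9 : ℝ) ≤ (m : ℝ) ^ 2) hN0.le
          have h3 : π ^ 2 * (m : ℝ) ^ 3 < 9.9225 * (m : ℝ) ^ 3 :=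
            mul_lt_mul_of_pos_right hpisq (by positivity)
          nlinarith [h1, h2, h3]
      have hfinal : (n : ℝ) * (π * m / n - (π * m / n) ^ 3 / 6)
          - ((m : ℝ) * ((n : ℝ) - m) + 1) * (π / n)
          = π / (6 * (n : ℝ) ^ 2) * (((m : ℝ) ^ 2 - 1) * (6 * (n : ℝ)) - π ^ 2 * (m : ℝ) ^ 3) := by
        field_simp
        ring
      have hpos2 : 0 < π / (6 * (n : ℝ) ^ 2)
          * (((m : ℝ) ^ 2 - 1) * (6 * (n : ℝ)) - π ^ 2 * (m : ℝ) ^ 3) :=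
        mul_pos (by positivity) (by linarith)
      linarith
    have step2 : (n : ℝ) * (t - t ^ 3 / 6) ≤ (n : ℝ) * Real.sin t :=
      mul_le_mul_of_nonneg_left hcb hN0.le
    calc ((m : ℝ) * ((n : ℝ) - m) + 1) * Real.sin (π / n)
        ≤ ((m : ℝ) * ((n : ℝ) - m) + 1) * (π / n) := step1
      _ < (n : ℝ) * (t - t ^ 3 / 6) := key
      _ ≤ (n : ℝ) * Real.sin t := step2

theorem stmt_17 (n k : ℤ) (hn : 2 ≤ n) (hk1 : 1 ≤ k) (hk2 : k ≤ n - 1) :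
    (n : ℝ) * Real.sin (π * k / n) / Real.sin (π / n) ≥ k * ((n : ℝ) - k) + 1
    ∧ ((n : ℝ) * Real.sin (π * k / n) / Real.sin (π / n) = k * ((n : ℝ) - k) + 1
        ↔ k = 1 ∨ k = n - 1) := by
  have hN0 : (0 : ℝ) < (n : ℝ) := by exact_mod_cast (by omega : (0:ℤ) < n)
  have hN2 : (2 : ℝ) ≤ (n : ℝ) := by exact_mod_cast hn
  have hpi := Real.pi_pos
  have hs : 0 < Real.sin (π / n) := by
    apply Real.sin_pos_of_pos_of_lt_pi
    · positivity
    · rw [div_lt_iff₀ hN0]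
      nlinarith
  by_cases hcase : k = 1 ∨ k = n - 1
  · -- equality case
    have heq : (n : ℝ) * Real.sin (π * k / n) / Real.sin (π / n) = k * ((n : ℝ) - k) + 1 := by
      rcases hcase with h1 | h2
      · subst h1
        push_cast
        rw [mul_one, mul_div_assoc, div_self hs.ne']
        ring
      · subst h2
        have harg : π * ((n : ℝ) - 1) / n = π - π / n := by
          field_simp
        push_cast
        rw [harg, Real.sin_pi_sub, mul_div_assoc, div_self hs.ne']
        push_cast
        ring
    exact ⟨le_of_eq heq.symm, by simp [heq, hcase]⟩
  · -- strict case: 2 ≤ k ≤ n - 2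
    push_neg at hcase
    obtain ⟨hne1, hnen1⟩ := hcase
    have hk2' : 2 ≤ k := by omega
    have hkn2 : k ≤ n - 2 := by omega
    have hstrict : k * ((n : ℝ) - k) + 1 < (n : ℝ) * Real.sin (π * k / n) / Real.sin (π / n) := by
      rw [lt_div_iff₀ hs]
      by_cases hhalf : 2 * k ≤ n
      · exact key_strict n k hk2' hhalf
      · push_neg at hhalf
        have hm2 : 2 ≤ n - k := by omega
        have hmn : 2 * (n - k) ≤ n := by omega
        have := key_strict n (n - k) hm2 hmn
        have hsin : Real.sin (π * ((n : ℤ) - k : ℤ) / n) = Real.sin (π * k / n) := by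
          push_cast
          have harg : π * ((n : ℝ) - k) / n = π - π * k / n := by
            field_simp
          rw [harg, Real.sin_pi_sub]
        rw [hsin] at this
        push_cast at this ⊢
        calc ((k : ℝ) * ((n : ℝ) - k) + 1) * Real.sin (π / n)
            = (((n : ℝ) - k) * ((n : ℝ) - ((n : ℝ) - k)) + 1) * Real.sin (π / n) := by ring_nf
          _ < (n : ℝ) * Real.sin (π * k / n) := this
    refine ⟨le_of_lt hstrict, ?_⟩
    constructor
    · intro heq
      exact absurd heq.symm (ne_of_lt hstrict)
    · intro h
      exact absurd h (by push_neg; exact ⟨hne1, hnen1⟩)
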